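/- The remainder protocol P_rmd satisfies StrongConsensus. -/

import Mathlib

/-! Formalization of population protocols (Angluin et al.), following
"Towards Efficient Verification of Population Protocols". -/

namespace PopProt

/-- A transition `(p, q) ↦ (p', q')`. -/
abbrev PTrans (Q : Type*) := Q × Q × Q × Q

variable {Q : Type*} [Fintype Q] [DecidableEq Q]

/-- `pre t` is the multiset of the two states consumed by transition `t`. -/
def pre (t : PTrans Q) : Multiset Q := {t.1, t.2.1}

/-- `post t` is the multiset of the two states produced by transition `t`. -/
def post (t : PTrans Q) : Multiset Q := {t.2.2.1, t.2.2.2}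

/-- A transition is silent if it cannot change the current configuration. -/
def SilentT (t : PTrans Q) : Prop := pre t = post t

instance : DecidablePred (SilentT (Q := Q)) := fun t => by
  unfold SilentT; infer_instance

/-- Transitions of the form `(p, q) ↦ (p, q)`. -/
def IsSilentPair (t : PTrans Q) : Prop := ∃ p q : Q, t = (p, q, p, q)

instance : DecidablePred (IsSilentPair (Q := Q)) := fun t => by
  unfold IsSilentPair; infer_instance

/-- A population protocol with states `Q` and input alphabet `A`.
Configurations are multisets over `Q` of cardinality at least 2. -/
structure Protocol (Q A : Type*) [Fintype Q] [DecidableEq Q] [Fintype A] where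
  T : Finset (PTrans Q)
  total : ∀ p q : Q, ∃ p' q' : Q, (p, q, p', q') ∈ T
  inp : A → Q
  out : Q → Bool

/-- `C →t C'`. -/
def StepBy (t : PTrans Q) (C C' : Multiset Q) : Prop :=
  pre t ≤ C ∧ C' = C - pre t + post t

/-- One step of the protocol with transition set `T`. -/
def Step (T : Finset (PTrans Q)) (C C' : Multiset Q) : Prop :=
  ∃ t ∈ T, StepBy t C C'

/-- Reachability `C →* C'`. -/
def Reach (T : Finset (PTrans Q)) : Multiset Q → Multiset Q → Prop :=
  Relation.ReflTransGen (Step T)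

/-- `C →w C'` for a finite sequence `w` of transitions. -/
def SeqStep (T : Finset (PTrans Q)) : List (PTrans Q) → Multiset Q → Multiset Q → Prop
  | [], C, C' => C' = C
  | t :: w, C, C' => t ∈ T ∧ ∃ D, StepBy t C D ∧ SeqStep T w D C'

/-- An execution: an infinite sequence of configurations related by steps. -/
def IsExec (T : Finset (PTrans Q)) (e : ℕ → Multiset Q) : Prop :=
  2 ≤ Multiset.card (e 0) ∧ ∀ i, Step T (e i) (e (i + 1))

/-- Fairness: if a step `C → C'` is possible and `C` occurs infinitely often,
then the step is taken infinitely often. -/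
def Fair (T : Finset (PTrans Q)) (e : ℕ → Multiset Q) : Prop :=
  ∀ C C' : Multiset Q, Step T C C' →
    {i | e i = C}.Infinite → {j | e j = C ∧ e (j + 1) = C'}.Infinite

/-- An execution is silent if it is eventually constant. -/
def SilentExec (e : ℕ → Multiset Q) : Prop := ∃ n : ℕ, ∀ i ≥ n, e i = e n

/-- A configuration is terminal if every transition enabled at it is silent. -/
def Terminal (T : Finset (PTrans Q)) (C : Multiset Q) : Prop :=
  ∀ t ∈ T, pre t ≤ C → SilentT t

/-- `C` is a consensus configuration with output `b`. -/
def Consensus (out : Q → Bool) (C : Multiset Q) (b : Bool) : Prop :=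
  ∀ q ∈ C, out q = b

/-- An execution stabilizes to `b`. -/
def Stabilizes (out : Q → Bool) (e : ℕ → Multiset Q) (b : Bool) : Prop :=
  ∃ n : ℕ, ∀ i ≥ n, Consensus out (e i) b

variable {A : Type*} [Fintype A]

/-- The initial configuration determined by input `X`. -/
def init (P : Protocol Q A) (X : Multiset A) : Multiset Q := X.map P.inp

/-- A protocol is silent if every fair execution from every configuration is silent. -/
def IsSilentProtocol (P : Protocol Q A) : Prop :=
  ∀ e : ℕ → Multiset Q, IsExec P.T e → Fair P.T e → SilentExec e

/-- A protocol is well-specified if for every input every fair execution from the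
corresponding initial configuration stabilizes to a common boolean value. -/
def WellSpecified (P : Protocol Q A) : Prop :=
  ∀ X : Multiset A, 2 ≤ Multiset.card X → ∃ b : Bool,
    ∀ e : ℕ → Multiset Q, e 0 = init P X → (∀ i, Step P.T (e i) (e (i + 1))) →
      Fair P.T e → Stabilizes P.out e b

/-- A protocol computes the predicate `φ`. -/
def Computes (P : Protocol Q A) (φ : Multiset A → Bool) : Prop :=
  ∀ X : Multiset A, 2 ≤ Multiset.card X →
    ∀ e : ℕ → Multiset Q, e 0 = init P X → (∀ i, Step P.T (e i) (e (i + 1))) →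
      Fair P.T e → Stabilizes P.out e (φ X)

/-- Termination: from every configuration some terminal configuration is reachable. -/
def Termination (P : Protocol Q A) : Prop :=
  ∀ C : Multiset Q, 2 ≤ Multiset.card C →
    ∃ C' : Multiset Q, Reach P.T C C' ∧ Terminal P.T C'

/-- NoSplitTerminal: all terminal configurations reachable from an initial configuration
are consensus configurations with one common output. -/
def NoSplitTerminal (P : Protocol Q A) : Prop :=
  ∀ X : Multiset A, 2 ≤ Multiset.card X → ∃ b : Bool,
    ∀ C' : Multiset Q, Reach P.T (init P X) C' → Terminal P.T C' →
      Consensus P.out C' b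

/-- All transitions of the form `(p, q) ↦ (p, q)`. -/
def silents (Q : Type*) [Fintype Q] [DecidableEq Q] : Finset (PTrans Q) :=
  Finset.univ.image fun pq : Q × Q => (pq.1, pq.2, pq.1, pq.2)

/-- The transition set of the induced protocol `P[S]`. -/
def induced (S : Finset (PTrans Q)) : Finset (PTrans Q) := S ∪ silents Q

/-- `(Ts 0, …, Ts (n-1))` is an ordered partition witnessing LayeredTermination. -/
def LayeredWitness (P : Protocol Q A) (n : ℕ) (Ts : Fin n → Finset (PTrans Q)) : Prop :=
  (∀ i, (Ts i).Nonempty) ∧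
  (∀ i j, i ≠ j → Disjoint (Ts i) (Ts j)) ∧
  Finset.univ.biUnion Ts = P.T ∧
  ∀ i : Fin n,
    (∀ e : ℕ → Multiset Q, IsExec (induced (Ts i)) e → SilentExec e) ∧
    (∀ C C' : Multiset Q, 2 ≤ Multiset.card C →
      Reach (induced (Ts i)) C C' →
      Terminal (induced ((Finset.univ.filter fun j => j < i).biUnion Ts)) C →
      Terminal (induced ((Finset.univ.filter fun j => j < i).biUnion Ts)) C')

/-- LayeredTermination. -/
def LayeredTermination (P : Protocol Q A) : Prop :=
  ∃ (n : ℕ) (Ts : Fin n → Finset (PTrans Q)), LayeredWitness P n Ts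

/-- `•R`, relative to the transition set `T`. -/
def preSetOf (T : Finset (PTrans Q)) (R : Finset Q) : Finset (PTrans Q) :=
  T.filter fun t => ∃ q ∈ R, q ∈ post t

/-- `R•`, relative to the transition set `T`. -/
def postSetOf (T : Finset (PTrans Q)) (R : Finset Q) : Finset (PTrans Q) :=
  T.filter fun t => ∃ q ∈ R, q ∈ pre t

/-- `R` is a `U`-trap: `R• ∩ U ⊆ •R`. -/
def IsTrap (T U : Finset (PTrans Q)) (R : Finset Q) : Prop :=
  postSetOf T R ∩ U ⊆ preSetOf T R

/-- `R` is a `U`-siphon: `•R ∩ U ⊆ R•`. -/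
def IsSiphon (T U : Finset (PTrans Q)) (R : Finset Q) : Prop :=
  preSetOf T R ∩ U ⊆ postSetOf T R

/-- The flow equations for `(C, C', x)`. -/
def FlowEq (T : Finset (PTrans Q)) (C C' : Multiset Q) (x : PTrans Q → ℕ) : Prop :=
  ∀ q : Q, (C'.count q : ℤ) =
    (C.count q : ℤ) + ∑ t ∈ T, (x t : ℤ) * (((post t).count q : ℤ) - ((pre t).count q : ℤ))

/-- The support of `x` within `T`. -/
def suppIn (T : Finset (PTrans Q)) (x : PTrans Q → ℕ) : Finset (PTrans Q) :=
  T.filter fun t => x t ≠ 0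

/-- Potential reachability `C ⇒ₓ C'` (flow equations plus trap and siphon constraints,
with `U = supp x`). -/
def PotReach (T : Finset (PTrans Q)) (C C' : Multiset Q) (x : PTrans Q → ℕ) : Prop :=
  FlowEq T C C' x ∧
  (∀ R : Finset Q, IsTrap T (suppIn T x) R → (∀ q ∈ R, q ∉ C') →
    preSetOf T R ∩ suppIn T x = ∅) ∧
  (∀ R : Finset Q, IsSiphon T (suppIn T x) R → (∀ q ∈ R, q ∉ C) →
    postSetOf T R ∩ suppIn T x = ∅)

/-- StrongConsensus: all terminal configurations potentially reachable from an initial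
configuration are consensus configurations with one common output. -/
def StrongConsensus (P : Protocol Q A) : Prop :=
  ∀ X : Multiset A, 2 ≤ Multiset.card X → ∃ b : Bool,
    ∀ (C' : Multiset Q) (x : PTrans Q → ℕ),
      PotReach P.T (init P X) C' x → Terminal P.T C' → Consensus P.out C' b

/-- `C` is `U`-dead: no transition of `U` can change `C`. -/
def UDeadConf (U : Finset (PTrans Q)) (C : Multiset Q) : Prop :=
  ∀ t ∈ U, ∀ C' : Multiset Q, StepBy t C C' → C' = C

/-- The protocol with transitions `T` is `U`-dead: from every `U`-dead configuration,
every reachable configuration is `U`-dead. -/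
def UDead (T U : Finset (PTrans Q)) : Prop :=
  ∀ C₀ : Multiset Q, 2 ≤ Multiset.card C₀ → UDeadConf U C₀ →
    ∀ C : Multiset Q, Reach T C₀ C → UDeadConf U C

end PopProt
namespace PopProt

section Remainder

variable (k m : ℕ) [NeZero m] (a : Fin k → ℤ) (c : ℤ)

/-- States of the remainder protocol: numerical states `0, …, m-1`
plus the two boolean states `false` and `true`. -/
abbrev Qrmd := Fin m ⊕ Bool

open Fin.NatCast in
/-- The value `c` as a numerical state (assuming `0 ≤ c < m`). -/
def cF : Fin m := (c.toNat : Fin m)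

/-- Non-silent transitions of the remainder protocol:
`(n, n') ↦ ((n + n') mod m, [(n + n') mod m = c])` and `(n, b) ↦ (n, [n = c])`. -/
def IsRmdTrans (t : PTrans (Qrmd m)) : Prop :=
  (∃ n n' : Fin m,
    t = (Sum.inl n, Sum.inl n', Sum.inl (n + n'), Sum.inr (decide (n + n' = cF m c)))) ∨
  (∃ (n : Fin m) (b : Bool),
    t = (Sum.inl n, Sum.inr b, Sum.inl n, Sum.inr (decide (n = cF m c))))

instance : DecidablePred (IsRmdTrans m c) := fun t => by
  unfold IsRmdTrans; infer_instance

/-- Transition set of the remainder protocol. -/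
def Trmd : Finset (PTrans (Qrmd m)) :=
  Finset.univ.filter fun t => IsRmdTrans m c t ∨ IsSilentPair t

open Fin.NatCast in
/-- The remainder protocol `P_rmd` computing `a₁x₁ + ⋯ + a_kx_k ≡ c (mod m)`. -/
def Prmd : Protocol (Qrmd m) (Fin k) where
  T := Trmd m c
  total := fun p q => ⟨p, q, by
    simp only [Trmd, Finset.mem_filter, Finset.mem_univ, true_and]
    exact Or.inr ⟨p, q, rfl⟩⟩
  inp := fun i => Sum.inl (((a i % (m : ℤ)).toNat : Fin m))
  out := fun q => match q with
    | Sum.inl n => decide (n = cF m c)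
    | Sum.inr b => b

/-- `T₁ = {t ∈ T : pre t = ⟦q, r⟧ for some q ∈ [0, m), r ∈ [0, m) ∪ {false}}`. -/
def T1rmd : Finset (PTrans (Qrmd m)) :=
  (Trmd m c).filter fun t => ∃ (q : Fin m) (r : Qrmd m),
    ((∃ n : Fin m, r = Sum.inl n) ∨ r = Sum.inr false) ∧ pre t = {Sum.inl q, r}

/-- `T₂ = {t ∈ T : pre t = ⟦q, true⟧ for some q ∈ [0, m)}`. -/
def T2rmd : Finset (PTrans (Qrmd m)) :=
  (Trmd m c).filter fun t => ∃ q : Fin m, pre t = {Sum.inl q, Sum.inr true}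

end Remainder

end PopProt

namespace PopProt

section Helpers

variable {Q : Type*} [Fintype Q] [DecidableEq Q]

lemma count_pair (a b q : Q) :
    ({a, b} : Multiset Q).count q = (if q = a then 1 else 0) + (if q = b then 1 else 0) := by
  rw [show ({a, b} : Multiset Q) = a ::ₘ {b} from rfl, Multiset.count_cons,
    Multiset.count_singleton]
  ring

lemma sum_count_pair {R : Type*} [CommRing R] (f : Q → R) (a b : Q) :
    ∑ q : Q, ((({a, b} : Multiset Q).count q : R)) * f q = f a + f b := by
  simp only [count_pair, Nat.cast_add, add_mul, Finset.sum_add_distrib]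
  simp [apply_ite (fun n : ℕ => (n : R)), ite_mul, Finset.sum_ite_eq']

lemma pair_le {a b : Q} {C : Multiset Q} (hab : a ≠ b) (ha : a ∈ C) (hb : b ∈ C) :
    ({a, b} : Multiset Q) ≤ C := by
  rw [Multiset.le_iff_count]
  intro q
  rw [count_pair]
  by_cases hqa : q = a
  · subst hqa
    rw [if_pos rfl, if_neg hab]
    simpa using Multiset.one_le_count_iff_mem.2 ha
  · rw [if_neg hqa]
    by_cases hqb : q = b
    · subst hqb
      rw [if_pos rfl]
      simpa using Multiset.one_le_count_iff_mem.2 hb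
    · simp [hqb]

lemma pair_le_self {a : Q} {C : Multiset Q} (h : 2 ≤ C.count a) :
    ({a, a} : Multiset Q) ≤ C := by
  rw [Multiset.le_iff_count]
  intro q
  rw [count_pair]
  by_cases hqa : q = a
  · subst hqa; simpa using h
  · simp [hqa]

lemma flow_invariant {R : Type*} [CommRing R] (f : Q → R) (T' : Finset (PTrans Q))
    (C C' : Multiset Q) (x : PTrans Q → ℕ) (hflow : FlowEq T' C C' x)
    (hbal : ∀ t ∈ T', x t ≠ 0 → f t.2.2.1 + f t.2.2.2 = f t.1 + f t.2.1) :
    ∑ q : Q, (C'.count q : R) * f q = ∑ q : Q, (C.count q : R) * f q := by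
  have h : ∀ q : Q, (C'.count q : R) = (C.count q : R) +
      ∑ t ∈ T', (x t : R) * (((post t).count q : R) - ((pre t).count q : R)) := by
    intro q
    have h2 := congrArg (fun z : ℤ => (z : R)) (hflow q)
    push_cast at h2
    simpa using h2
  have key : ∑ q : Q, (∑ t ∈ T', (x t : R) *
      (((post t).count q : R) - ((pre t).count q : R))) * f q = 0 := by
    have swap : ∑ q : Q, (∑ t ∈ T', (x t : R) *
        (((post t).count q : R) - ((pre t).count q : R))) * f q
        = ∑ t ∈ T', (x t : R) * ((∑ q : Q, ((post t).count q : R) * f q)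
            - ∑ q : Q, ((pre t).count q : R) * f q) := by
      simp only [Finset.sum_mul]
      rw [Finset.sum_comm]
      refine Finset.sum_congr rfl fun t _ => ?_
      rw [mul_sub, Finset.mul_sum, Finset.mul_sum, ← Finset.sum_sub_distrib]
      refine Finset.sum_congr rfl fun q _ => ?_
      ring
    rw [swap]
    refine Finset.sum_eq_zero fun t ht => ?_
    by_cases hx : x t = 0
    · simp [hx]
    · have hp : (post t : Multiset Q) = {t.2.2.1, t.2.2.2} := rfl
      have hpr : (pre t : Multiset Q) = {t.1, t.2.1} := rfl
      rw [hp, hpr, sum_count_pair, sum_count_pair, hbal t ht hx, sub_self, mul_zero]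
  calc ∑ q : Q, (C'.count q : R) * f q
      = ∑ q : Q, ((C.count q : R) * f q + (∑ t ∈ T', (x t : R) *
          (((post t).count q : R) - ((pre t).count q : R))) * f q) := by
        refine Finset.sum_congr rfl fun q _ => ?_
        rw [h q, add_mul]
    _ = ∑ q : Q, (C.count q : R) * f q := by
        rw [Finset.sum_add_distrib, key, add_zero]

end Helpers

section RmdHelpers

variable (m : ℕ) [NeZero m] (c : ℤ)

/-- Value of a state in `ZMod m`. -/
def rval : Qrmd m → ZMod m
  | Sum.inl n => (n.val : ZMod m)
  | Sum.inr _ => 0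

/-- Integer weight: 1 on numerical states, 0 on boolean states. -/
def wnum : Qrmd m → ℤ
  | Sum.inl _ => 1
  | Sum.inr _ => 0

/-- Sum of values of a configuration. -/
def msum (C : Multiset (Qrmd m)) : ZMod m := ∑ q : Qrmd m, (C.count q : ZMod m) * rval m q

/-- Numerical states. -/
def Rnum : Finset (Qrmd m) := Finset.univ.filter fun q => q.isLeft

lemma mem_Trmd_cases {t : PTrans (Qrmd m)} (ht : t ∈ Trmd m c) :
    IsRmdTrans m c t ∨ IsSilentPair t := by
  simpa [Trmd] using ht

lemma rnum_trap (U : Finset (PTrans (Qrmd m))) : IsTrap (Trmd m c) U (Rnum m) := by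
  intro t ht
  rw [Finset.mem_inter] at ht
  obtain ⟨hpost, -⟩ := ht
  rw [postSetOf, Finset.mem_filter] at hpost
  obtain ⟨htT, q, hqR, hqpre⟩ := hpost
  rw [preSetOf, Finset.mem_filter]
  refine ⟨htT, ?_⟩
  rcases mem_Trmd_cases m c htT with (⟨n, n', rfl⟩ | ⟨n, b, rfl⟩) | ⟨p, q', rfl⟩
  · exact ⟨Sum.inl (n + n'), by simp [Rnum], by simp [post]⟩
  · exact ⟨Sum.inl n, by simp [Rnum], by simp [post]⟩
  · exact ⟨q, hqR, by simpa [pre, post] using hqpre⟩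

lemma rval_balance {t : PTrans (Qrmd m)} (ht : t ∈ Trmd m c) :
    rval m t.2.2.1 + rval m t.2.2.2 = rval m t.1 + rval m t.2.1 := by
  rcases mem_Trmd_cases m c ht with (⟨n, n', rfl⟩ | ⟨n, b, rfl⟩) | ⟨p, q', rfl⟩
  · show ((n + n').val : ZMod m) + 0 = (n.val : ZMod m) + (n'.val : ZMod m)
    rw [Fin.val_add, add_zero, ← Nat.cast_add, ZMod.natCast_mod]
  · show (n.val : ZMod m) + 0 = (n.val : ZMod m) + 0
    rfl
  · ring

end RmdHelpers

end PopProt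

open PopProt in
/-- Proposition: the remainder protocol `P_rmd` satisfies StrongConsensus. -/
theorem remainder_strongConsensus
    (k m : ℕ) [NeZero m] (a : Fin k → ℤ) (c : ℤ)
    (hk : 1 ≤ k) (hm : 2 ≤ m) (hc0 : 0 ≤ c) (hc1 : c < m) :
    StrongConsensus (Prmd k m a c) := by
  classical
  intro X hX
  set C := init (Prmd k m a c) X with hCdef
  refine ⟨decide (msum m C = ((cF m c).val : ZMod m)), ?_⟩
  intro C' x hpot hterm
  obtain ⟨hflow, htrap, -⟩ := hpot
  have hflow' : FlowEq (Trmd m c) C C' x := hflow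
  have hterm' : ∀ t ∈ Trmd m c, pre t ≤ C' → SilentT t := hterm
  -- Step 1: C' contains a numerical state
  have hXne : X ≠ 0 := by
    intro h; rw [h] at hX; simp at hX
  obtain ⟨σ, hσ⟩ := Multiset.exists_mem_of_ne_zero hXne
  have hn₀ : ∃ n₀ : Fin m, Sum.inl n₀ ∈ C' := by
    by_contra hno
    push_neg at hno
    have h0 : ∀ q ∈ Rnum m, q ∉ C' := by
      intro q hq
      rw [Rnum, Finset.mem_filter] at hq
      obtain ⟨y, rfl⟩ := Sum.isLeft_iff.1 hq.2
      exact hno y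
    have hpre : preSetOf (Trmd m c) (Rnum m) ∩ suppIn (Trmd m c) x = ∅ :=
      htrap (Rnum m) (rnum_trap m c _) h0
    have hbal : ∀ t ∈ Trmd m c, x t ≠ 0 →
        wnum m t.2.2.1 + wnum m t.2.2.2 = wnum m t.1 + wnum m t.2.1 := by
      intro t ht hx
      rcases mem_Trmd_cases m c ht with htt | ⟨p, q', rfl⟩
      · exfalso
        have htpre : t ∈ preSetOf (Trmd m c) (Rnum m) := by
          rw [preSetOf, Finset.mem_filter]
          refine ⟨ht, ?_⟩
          rcases htt with ⟨n, n', rfl⟩ | ⟨n, b, rfl⟩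
          · exact ⟨Sum.inl (n + n'), by simp [Rnum], by simp [post]⟩
          · exact ⟨Sum.inl n, by simp [Rnum], by simp [post]⟩
        have hmem : t ∈ preSetOf (Trmd m c) (Rnum m) ∩ suppIn (Trmd m c) x :=
          Finset.mem_inter.2 ⟨htpre, Finset.mem_filter.2 ⟨ht, hx⟩⟩
        rw [hpre] at hmem
        exact absurd hmem (Finset.notMem_empty t)
      · rfl
    have heq := flow_invariant (wnum m) (Trmd m c) C C' x hflow' hbal
    have hL : ∑ q : Qrmd m, ((C'.count q : ℤ)) * wnum m q = 0 := by
      refine Finset.sum_eq_zero fun q _ => ?_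
      match q with
      | Sum.inl n => rw [Multiset.count_eq_zero_of_notMem (hno n)]; simp
      | Sum.inr b => show _ * (0:ℤ) = 0; rw [mul_zero]
    have hq₀ : (Prmd k m a c).inp σ ∈ C := Multiset.mem_map_of_mem _ hσ
    have h1 : (1 : ℤ) ≤ ∑ q : Qrmd m, ((C.count q : ℤ)) * wnum m q := by
      have hle : (1:ℤ) ≤ (C.count ((Prmd k m a c).inp σ) : ℤ) *
          wnum m ((Prmd k m a c).inp σ) := by
        have hc1 : 1 ≤ C.count ((Prmd k m a c).inp σ) :=
          Multiset.one_le_count_iff_mem.2 hq₀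
        have hw : wnum m ((Prmd k m a c).inp σ) = 1 := rfl
        rw [hw, mul_one]; exact_mod_cast hc1
      refine le_trans hle (Finset.single_le_sum
        (f := fun q => (C.count q : ℤ) * wnum m q) (fun q _ => ?_) (Finset.mem_univ _))
      show (0:ℤ) ≤ (C.count q : ℤ) * wnum m q
      match q with
      | Sum.inl n =>
        show (0:ℤ) ≤ _ * (1:ℤ)
        positivity
      | Sum.inr b =>
        show (0:ℤ) ≤ _ * (0:ℤ)
        rw [mul_zero]
    rw [heq] at hL
    omega
  obtain ⟨n₀, hn₀mem⟩ := hn₀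
  -- Step 2: terminal structure
  have hno2 : ∀ n n' : Fin m, ¬ ({Sum.inl n, Sum.inl n'} : Multiset (Qrmd m)) ≤ C' := by
    intro n n' hle
    have htT : ((Sum.inl n, Sum.inl n', Sum.inl (n + n'),
        Sum.inr (decide (n + n' = cF m c))) : PTrans (Qrmd m)) ∈ Trmd m c := by
      simp only [Trmd, Finset.mem_filter, Finset.mem_univ, true_and]
      exact Or.inl (Or.inl ⟨n, n', rfl⟩)
    have hsil := hterm' _ htT hle
    have hmem : (Sum.inr (decide (n + n' = cF m c)) : Qrmd m) ∈
        pre ((Sum.inl n, Sum.inl n', Sum.inl (n + n'),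
          Sum.inr (decide (n + n' = cF m c))) : PTrans (Qrmd m)) := by
      rw [hsil]; simp [post]
    simp [pre] at hmem
  have huniq : ∀ n : Fin m, Sum.inl n ∈ C' → n = n₀ := by
    intro n hn
    by_contra hne
    exact hno2 n n₀ (pair_le (by simp [hne]) hn hn₀mem)
  have hcnt1 : C'.count (Sum.inl n₀) = 1 := by
    have h1 : 1 ≤ C'.count (Sum.inl n₀) := Multiset.one_le_count_iff_mem.2 hn₀mem
    have h2 : C'.count (Sum.inl n₀) ≤ 1 := by
      by_contra h
      exact hno2 n₀ n₀ (pair_le_self (by omega))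
    omega
  have hbool : ∀ b : Bool, Sum.inr b ∈ C' → b = decide (n₀ = cF m c) := by
    intro b hb
    have htT : ((Sum.inl n₀, Sum.inr b, Sum.inl n₀,
        Sum.inr (decide (n₀ = cF m c))) : PTrans (Qrmd m)) ∈ Trmd m c := by
      simp only [Trmd, Finset.mem_filter, Finset.mem_univ, true_and]
      exact Or.inl (Or.inr ⟨n₀, b, rfl⟩)
    have hle : pre ((Sum.inl n₀, Sum.inr b, Sum.inl n₀,
        Sum.inr (decide (n₀ = cF m c))) : PTrans (Qrmd m)) ≤ C' :=
      pair_le (by simp) hn₀mem hb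
    have hsil := hterm' _ htT hle
    have hsil' : ((Sum.inl n₀ : Qrmd m) ::ₘ {Sum.inr b}) =
        ((Sum.inl n₀ : Qrmd m) ::ₘ {Sum.inr (decide (n₀ = cF m c))}) := hsil
    have h2 := (Multiset.cons_inj_right _).1 hsil'
    simpa using h2
  -- Step 3: msum C' = n₀.val
  have hcnt : ∀ n : Fin m, C'.count (Sum.inl n) = if n = n₀ then 1 else 0 := by
    intro n
    by_cases h : n = n₀
    · subst h; rw [hcnt1, if_pos rfl]
    · rw [if_neg h, Multiset.count_eq_zero]
      intro hmem; exact h (huniq n hmem)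
  have hmsC' : msum m C' = (n₀.val : ZMod m) := by
    rw [msum, Fintype.sum_sum_type]
    have h2 : ∀ b : Bool, (C'.count (Sum.inr b) : ZMod m) * rval m (Sum.inr b) = 0 := by
      intro b; show _ * (0 : ZMod m) = 0; rw [mul_zero]
    rw [Finset.sum_congr rfl (fun b _ => h2 b), Finset.sum_const_zero, add_zero]
    have h1 : ∀ n : Fin m, (C'.count (Sum.inl n) : ZMod m) * rval m (Sum.inl n) =
        if n = n₀ then rval m (Sum.inl n) else 0 := by
      intro n
      rw [hcnt n]
      by_cases h : n = n₀ <;> simp [h]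
    rw [Finset.sum_congr rfl (fun n _ => h1 n), Finset.sum_ite_eq' Finset.univ n₀]
    simp [rval]
  -- Step 4: invariance
  have hinv := flow_invariant (rval m) (Trmd m c) C C' x hflow'
    (fun t ht _ => rval_balance m c ht)
  have hkey : (n₀.val : ZMod m) = msum m C := by
    rw [← hmsC']; exact hinv
  -- Step 5: conclusion
  have hb : decide (n₀ = cF m c) = decide (msum m C = ((cF m c).val : ZMod m)) := by
    rw [decide_eq_decide]
    constructor
    · intro h; rw [← hkey, h]
    · intro h
      rw [← hkey] at h
      have hv := congrArg ZMod.val h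
      rw [ZMod.val_cast_of_lt n₀.isLt, ZMod.val_cast_of_lt (cF m c).isLt] at hv
      exact Fin.ext hv
  intro q hq
  match q with
  | Sum.inl n =>
    have hn : n = n₀ := huniq n hq
    subst hn
    show decide (n = cF m c) = _
    rw [hb]
  | Sum.inr bb =>
    have hbb : bb = decide (n₀ = cF m c) := hbool bb hq
    show bb = _
    rw [hbb, hb]
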